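/- Let J ≥ 1 be an integer and let q be a probability mass function (PMF) on Fin J → Fin J such that every d in the support of q has a default choice. Then there exist β : Fin J → ℝ with β j ≥ 0 for all j, a probability measure μ on Fin J → ℝ that is absolutely continuous with respect to the Lebesgue (volume) measure, and a measurable map D : (Fin J → ℝ) → (Fin J → Fin J) such that: (i) for μ-almost every ε and every z ∈ Fin J, D(ε)(z) is the unique strict maximizer of the perturbed utilities under instrument z, i.e. β m · 1{m = z} + ε m < β (D(ε)(z)) · 1{D(ε)(z) = z} + ε (D(ε)(z)) for all m ≠ D(ε)(z); and (ii) the pushforward of μ under D equals (the measure associated with) q. -/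

import Mathlib

open MeasureTheory

namespace Stmt3Aux

variable {J : ℕ}

/-- Utility of choice `m` under instrument `z` with β ≡ 1. -/
def u (z m : Fin J) (ε : Fin J → ℝ) : ℝ := (if m = z then (1:ℝ) else 0) + ε m

lemma u_measurable (z m : Fin J) : Measurable (fun ε => u z m ε) :=
  measurable_const.add (measurable_pi_apply m)

lemma argmax_unique {z : Fin J} {ε : Fin J → ℝ} {m₁ m₂ : Fin J}
    (h1 : ∀ m' ≠ m₁, u z m' ε < u z m₁ ε) (h2 : ∀ m' ≠ m₂, u z m' ε < u z m₂ ε) :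
    m₁ = m₂ := by
  by_contra hne
  have a := h1 m₂ (Ne.symm hne)
  have b := h2 m₁ hne
  linarith

noncomputable def Dmap (ε : Fin J → ℝ) (z : Fin J) : Fin J :=
  if h : ∃ m, ∀ m' ≠ m, u z m' ε < u z m ε then h.choose else z

lemma Dmap_eq {ε : Fin J → ℝ} {z m : Fin J} (h : ∀ m' ≠ m, u z m' ε < u z m ε) :
    Dmap ε z = m := by
  unfold Dmap
  rw [dif_pos ⟨m, h⟩]
  exact argmax_unique (Exists.choose_spec (⟨m, h⟩ : ∃ m, ∀ m' ≠ m, u z m' ε < u z m ε)) h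

lemma measurable_Dmap : Measurable (Dmap : (Fin J → ℝ) → Fin J → Fin J) := by
  apply measurable_pi_lambda
  intro z
  apply measurable_to_countable'
  intro m0
  classical
  set A : Fin J → Set (Fin J → ℝ) := fun m => {ε | ∀ m' ≠ m, u z m' ε < u z m ε} with hAdef
  have hA : ∀ m, MeasurableSet (A m) := by
    intro m
    have : A m = ⋂ m', ⋂ (_ : m' ≠ m), {ε | u z m' ε < u z m ε} := by
      ext ε; simp [hAdef, Set.mem_iInter]
    rw [this]
    exact MeasurableSet.iInter fun m' => MeasurableSet.iInter fun _ =>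
      measurableSet_lt (u_measurable z m') (u_measurable z m)
  have hpre : (fun ε => Dmap ε z) ⁻¹' {m0}
      = if z = m0 then A m0 ∪ (⋃ m, A m)ᶜ else A m0 := by
    ext ε
    simp only [Set.mem_preimage, Set.mem_singleton_iff]
    unfold Dmap
    by_cases hex : ∃ m, ∀ m' ≠ m, u z m' ε < u z m ε
    · rw [dif_pos hex]
      have hch := hex.choose_spec
      have hmem : ε ∈ ⋃ m, A m := Set.mem_iUnion.2 ⟨hex.choose, hch⟩
      constructor
      · intro h
        have : ε ∈ A m0 := by rw [← h]; exact hch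
        split_ifs with hzm
        · exact Or.inl this
        · exact this
      · intro h
        split_ifs at h with hzm
        · rcases h with h | h
          · exact argmax_unique hch h
          · exact absurd hmem h
        · exact argmax_unique hch h
    · rw [dif_neg hex]
      have hn : ∀ m, ε ∉ A m := fun m hm => hex ⟨m, hm⟩
      split_ifs with hzm
      · constructor
        · intro _
          exact Or.inr (by simpa [Set.mem_iUnion] using fun m => hn m)
        · intro _; exact hzm
      · constructor
        · intro h; exact absurd h hzm
        · intro h; exact absurd h (hn m0)
  rw [hpre]
  split_ifs
  · exact ((hA m0).union (MeasurableSet.iUnion hA).compl)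
  · exact hA m0

noncomputable def jstar (hJ : 1 ≤ J) (d : Fin J → Fin J) : Fin J :=
  if h : ∃ j0 : Fin J, ∀ j, d j = j ∨ d j = j0 then h.choose else ⟨0, hJ⟩

lemma jstar_spec (hJ : 1 ≤ J) {d : Fin J → Fin J}
    (h : ∃ j0 : Fin J, ∀ j, d j = j ∨ d j = j0) :
    ∀ j, d j = j ∨ d j = jstar hJ d := by
  unfold jstar
  rw [dif_pos h]
  exact h.choose_spec

noncomputable def lo (hJ : 1 ≤ J) (d : Fin J → Fin J) (j : Fin J) : ℝ :=
  if j = jstar hJ d then 3.5 else if d j = j then 3 else 0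

def box (hJ : 1 ≤ J) (d : Fin J → Fin J) : Set (Fin J → ℝ) :=
  Set.univ.pi fun j => Set.Ioo (lo hJ d j) (lo hJ d j + 1/2)

lemma box_measurable (hJ : 1 ≤ J) (d : Fin J → Fin J) : MeasurableSet (box hJ d) :=
  MeasurableSet.univ_pi fun _ => measurableSet_Ioo

lemma argmax_on_box (hJ : 1 ≤ J) (d : Fin J → Fin J)
    (hd : ∀ j, d j = j ∨ d j = jstar hJ d) {ε : Fin J → ℝ} (hε : ε ∈ box hJ d)
    (z : Fin J) : ∀ m ≠ d z, u z m ε < u z (d z) ε := by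
  intro m hm
  have hb : ∀ j, lo hJ d j < ε j ∧ ε j < lo hJ d j + 1/2 := fun j => hε j (Set.mem_univ j)
  have hub : ∀ j, ε j < 4 := by
    intro j
    have h2 := (hb j).2
    unfold lo at h2
    split_ifs at h2 <;> linarith
  have hub' : ∀ j, j ≠ jstar hJ d → ε j < 3.5 := by
    intro j hj
    have h2 := (hb j).2
    unfold lo at h2
    rw [if_neg hj] at h2
    split_ifs at h2 <;> linarith
  by_cases hzz : d z = z
  · rw [hzz] at hm ⊢
    have h1 : u z z ε = 1 + ε z := by simp [u]
    have h2 : u z m ε = ε m := by simp [u, hm]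
    have hloz : (3:ℝ) ≤ lo hJ d z := by
      unfold lo
      by_cases h : z = jstar hJ d
      · rw [if_pos h]; norm_num
      · rw [if_neg h, if_pos hzz]
    have := (hb z).1
    have := hub m
    rw [h1, h2]
    linarith
  · have hdz : d z = jstar hJ d := (hd z).resolve_left hzz
    have hjz : jstar hJ d ≠ z := fun h => hzz (hdz.trans h)
    have h1 : u z (d z) ε = ε (jstar hJ d) := by rw [hdz]; simp [u, hjz]
    have hεj : (3.5:ℝ) < ε (jstar hJ d) := by
      have := (hb (jstar hJ d)).1
      unfold lo at this
      rw [if_pos rfl] at this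
      linarith
    rw [h1]
    by_cases hmz : m = z
    · subst hmz
      have h2 : u m m ε = 1 + ε m := by simp [u]
      have hlom : lo hJ d m = 0 := by
        unfold lo
        rw [if_neg (Ne.symm hjz), if_neg hzz]
      have := (hb m).2
      rw [hlom] at this
      rw [h2]
      linarith
    · have h2 : u z m ε = ε m := by simp [u, hmz]
      have hmj : m ≠ jstar hJ d := by rw [← hdz]; exact hm
      have := hub' m hmj
      rw [h2]
      linarith

lemma Dmap_on_box (hJ : 1 ≤ J) (d : Fin J → Fin J)
    (hd : ∀ j, d j = j ∨ d j = jstar hJ d) {ε : Fin J → ℝ} (hε : ε ∈ box hJ d) :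
    Dmap ε = d :=
  funext fun z => Dmap_eq (argmax_on_box hJ d hd hε z)

lemma volume_box (hJ : 1 ≤ J) (d : Fin J → Fin J) :
    volume (box hJ d) = ENNReal.ofReal (1/2) ^ J := by
  rw [box, volume_pi_pi]
  have : ∀ j : Fin J, volume (Set.Ioo (lo hJ d j) (lo hJ d j + 1/2))
      = ENNReal.ofReal (1/2) := by
    intro j
    rw [Real.volume_Ioo]
    ring_nf
  simp [this]

lemma volume_box_ne_zero (hJ : 1 ≤ J) (d : Fin J → Fin J) : volume (box hJ d) ≠ 0 := by
  rw [volume_box]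
  exact pow_ne_zero _ (by norm_num [ENNReal.ofReal_eq_zero])

lemma volume_box_ne_top (hJ : 1 ≤ J) (d : Fin J → Fin J) : volume (box hJ d) ≠ ⊤ := by
  rw [volume_box]
  exact ENNReal.pow_ne_top ENNReal.ofReal_ne_top

end Stmt3Aux

open Stmt3Aux

/-- Lemma 2 of the paper (Q₂ ⊆ Q₁): every distribution of potential
treatments satisfying the default-choice restriction is generated by an additive
random utility model. -/
theorem stmt_3 (J : ℕ) (hJ : 1 ≤ J) (q : PMF (Fin J → Fin J))
    (hq : ∀ d ∈ q.support, ∃ jstar : Fin J, ∀ j, d j = j ∨ d j = jstar) :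
    ∃ (β : Fin J → ℝ) (μ : Measure (Fin J → ℝ)) (D : (Fin J → ℝ) → (Fin J → Fin J)),
      (∀ j, 0 ≤ β j) ∧
      IsProbabilityMeasure μ ∧ μ ≪ volume ∧ Measurable D ∧
      (∀ᵐ ε ∂μ, ∀ z : Fin J, ∀ m ≠ D ε z,
        β m * (if m = z then (1 : ℝ) else 0) + ε m
          < β (D ε z) * (if D ε z = z then (1 : ℝ) else 0) + ε (D ε z)) ∧
      μ.map D = q.toMeasure := by
  classical
  set μ : Measure (Fin J → ℝ) :=
    ∑ d : Fin J → Fin J, q d • ((volume (box hJ d))⁻¹ • volume.restrict (box hJ d)) with hμdef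
  have hcancel : ∀ d : Fin J → Fin J,
      (volume (box hJ d))⁻¹ * volume (box hJ d) = 1 := fun d =>
    ENNReal.inv_mul_cancel (volume_box_ne_zero hJ d) (volume_box_ne_top hJ d)
  have hμapp : ∀ t : Set (Fin J → ℝ),
      μ t = ∑ d : Fin J → Fin J, q d * ((volume (box hJ d))⁻¹ * volume (t ∩ box hJ d)) := by
    intro t
    rw [hμdef, Measure.finset_sum_apply]
    refine Finset.sum_congr rfl fun d _ => ?_
    rw [Measure.smul_apply, Measure.smul_apply, Measure.restrict_apply' (box_measurable hJ d)]
    simp [mul_assoc]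
  have hdspec : ∀ d : Fin J → Fin J, q d ≠ 0 → ∀ j, d j = j ∨ d j = jstar hJ d := by
    intro d hd
    exact jstar_spec hJ (hq d ((q.mem_support_iff _).2 hd))
  have hDbox : ∀ d : Fin J → Fin J, q d ≠ 0 → ∀ ε ∈ box hJ d, Dmap ε = d := by
    intro d hd ε hε
    exact Dmap_on_box hJ d (hdspec d hd) hε
  refine ⟨fun _ => 1, μ, Dmap, fun _ => zero_le_one, ?_, ?_, measurable_Dmap, ?_, ?_⟩
  · -- probability measure
    constructor
    rw [hμapp]
    simp only [Set.univ_inter]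
    calc ∑ d : Fin J → Fin J, q d * ((volume (box hJ d))⁻¹ * volume (box hJ d))
        = ∑ d : Fin J → Fin J, q d := by
          refine Finset.sum_congr rfl fun d _ => by rw [hcancel d, mul_one]
      _ = 1 := by rw [← tsum_fintype (L := .unconditional _)]; exact q.tsum_coe
  · -- absolutely continuous
    intro t ht
    rw [hμapp]
    have : ∀ d : Fin J → Fin J, volume (t ∩ box hJ d) = 0 :=
      fun d => measure_mono_null Set.inter_subset_left ht
    simp [this]
  · -- a.e. strict argmax
    rw [ae_iff]
    have hsub : {ε | ¬ ∀ z : Fin J, ∀ m ≠ Dmap ε z,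
        (fun _ => (1:ℝ)) m * (if m = z then (1 : ℝ) else 0) + ε m
          < (fun _ => (1:ℝ)) (Dmap ε z) * (if Dmap ε z = z then (1 : ℝ) else 0) + ε (Dmap ε z)}
        ∩ (⋃ d ∈ {d : Fin J → Fin J | q d ≠ 0}, box hJ d) = ∅ := by
      ext ε
      simp only [Set.mem_inter_iff, Set.mem_setOf_eq, Set.mem_iUnion, Set.mem_empty_iff_false,
        iff_false, not_and]
      rintro hbad ⟨d, hd, hε⟩
      apply hbad
      intro z m hm
      have hD : Dmap ε = d := hDbox d hd ε hε
      rw [hD] at hm ⊢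
      have := argmax_on_box hJ d (hdspec d hd) hε z m hm
      simpa [u, one_mul] using this
    rw [hμapp]
    apply Finset.sum_eq_zero
    intro d _
    by_cases hd : q d = 0
    · simp [hd]
    · have : {ε | ¬ ∀ z : Fin J, ∀ m ≠ Dmap ε z,
          (fun _ => (1:ℝ)) m * (if m = z then (1 : ℝ) else 0) + ε m
            < (fun _ => (1:ℝ)) (Dmap ε z) * (if Dmap ε z = z then (1 : ℝ) else 0) + ε (Dmap ε z)}
          ∩ box hJ d = ∅ := by
        apply Set.eq_empty_of_subset_empty
        rw [← hsub]
        exact Set.inter_subset_inter_right _ (Set.subset_biUnion_of_mem hd)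
      rw [this]
      simp
  · -- pushforward
    ext s hs
    rw [Measure.map_apply measurable_Dmap hs, hμapp,
      PMF.toMeasure_apply q hs, tsum_fintype]
    refine Finset.sum_congr rfl fun d _ => ?_
    by_cases hd : q d = 0
    · simp [hd, Set.indicator, hd]
    · have hinter : Dmap ⁻¹' s ∩ box hJ d = if d ∈ s then box hJ d else ∅ := by
        ext ε
        simp only [Set.mem_inter_iff, Set.mem_preimage]
        constructor
        · rintro ⟨hεs, hεb⟩
          rw [hDbox d hd ε hεb] at hεs
          simp [hεs, hεb]
        · intro h
          split_ifs at h with hds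
          · exact ⟨by rw [hDbox d hd ε h]; exact hds, h⟩
          · exact absurd h (Set.notMem_empty ε)
      rw [hinter]
      by_cases hds : d ∈ s
      · simp [hds, hcancel d, Set.indicator_of_mem hds]
      · simp [hds, Set.indicator_of_notMem hds]
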